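/- arXiv:2511.08422 — 2 statements merged into one kernel-verified Lean document; each statement's English description precedes it below -/
import Mathlib

section
/- Let m > 4 be an integer divisible by 4 and let ζ_m = exp(2πi/m) ∈ ℂ. Then the degree of the field ℚ(ζ_m − ζ_m⁻¹) over ℚ equals φ(m)/2, where φ is Euler's totient function. -/
set_option maxHeartbeats 1000000

open IntermediateField Polynomial

/-- `zetaC m` is the primitive `m`-th root of unity `exp(2πi/m)` in `ℂ`. -/
noncomputable def zetaC (m : ℕ) : ℂ := Complex.exp (2 * Real.pi * Complex.I / m)

/-- For `m > 4` divisible by `4`, the degree of `ℚ(ζ_m - ζ_m⁻¹)` over `ℚ` is `φ(m)/2`. -/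
theorem stmt4 (m : ℕ) (hm : 4 < m) (h4 : 4 ∣ m) :
    Module.finrank ℚ (ℚ⟮zetaC m - (zetaC m)⁻¹⟯ : IntermediateField ℚ ℂ) =
      Nat.totient m / 2 := by
  have hm0 : m ≠ 0 := by omega
  haveI : NeZero m := ⟨hm0⟩
  set ζ : ℂ := zetaC m with hζdef
  have hζ : IsPrimitiveRoot ζ m := Complex.isPrimitiveRoot_exp m hm0
  have hζ0 : ζ ≠ 0 := hζ.ne_zero hm0
  have hint : IsIntegral ℚ ζ := (hζ.isIntegral (by omega)).tower_top
  have hpow1 : ζ ^ m = 1 := hζ.pow_eq_one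
  have hinv : ζ⁻¹ = ζ ^ (m - 1) := by
    apply inv_eq_of_mul_eq_one_right
    rw [← pow_succ']
    have : m - 1 + 1 = m := by omega
    rw [this, hpow1]
  set α : ℂ := ζ - ζ⁻¹ with hαdef
  have hαint : IsIntegral ℚ α := hint.sub (hinv ▸ hint.pow _)
  have hζmem : ζ ∈ ℚ⟮ζ⟯ := mem_adjoin_simple_self ℚ ζ
  have hαmemL : α ∈ ℚ⟮ζ⟯ := sub_mem hζmem (inv_mem hζmem)
  set K : IntermediateField ℚ ℂ := ℚ⟮α⟯ with hKdef
  have hKL : K ≤ ℚ⟮ζ⟯ := adjoin_simple_le_iff.mpr hαmemL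
  -- total degree
  have hLrank : Module.finrank ℚ ℚ⟮ζ⟯ = Nat.totient m := by
    rw [adjoin.finrank hint, ← cyclotomic_eq_minpoly_rat hζ (by omega),
      natDegree_cyclotomic]
  -- tower
  have hrestrict : (IntermediateField.adjoin K {ζ}).restrictScalars ℚ = ℚ⟮ζ⟯ := by
    erw [hKdef, adjoin_simple_adjoin_simple]
    apply le_antisymm
    · exact adjoin_le_iff.mpr (by
        rintro x (rfl | rfl)
        · exact hαmemL
        · exact hζmem)
    · exact adjoin.mono _ _ _ (by simp)
  haveI : FiniteDimensional ℚ K := adjoin.finiteDimensional hαint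
  have hζintK : IsIntegral K ζ := hint.tower_top
  haveI : FiniteDimensional K (IntermediateField.adjoin K {ζ} : IntermediateField K ℂ) :=
    adjoin.finiteDimensional hζintK
  have htower : Module.finrank ℚ K *
      Module.finrank K (IntermediateField.adjoin K {ζ} : IntermediateField K ℂ) =
      Nat.totient m := by
    rw [Module.finrank_mul_finrank, ← hLrank, ← hrestrict]
    rfl
  -- the top step has degree ≤ 2
  set e := Module.finrank K (IntermediateField.adjoin K {ζ} : IntermediateField K ℂ) with hedef
  have he2 : e ≤ 2 := by
    have : (IntermediateField.adjoin K {ζ} : IntermediateField K ℂ) = K⟮ζ⟯ := rfl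
    rw [hedef, adjoin.finrank hζintK]
    set a : K := AdjoinSimple.gen ℚ α with hadef
    have ha : (algebraMap K ℂ) a = α := rfl
    set p : Polynomial K := X ^ 2 - C a * X - 1 with hpdef
    have hproot : (aeval ζ) p = 0 := by
      have : (aeval ζ) p = ζ ^ 2 - α * ζ - 1 := by
        simp only [hpdef, map_sub, map_mul, map_one, map_pow, aeval_X, aeval_C, ha]
      rw [this, hαdef]
      linear_combination inv_mul_cancel₀ hζ0
    have hpdeg : p.natDegree = 2 := by
      rw [hpdef]
      compute_degree!
    have hpne : p ≠ 0 := fun h => by simp [h] at hpdeg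
    have := minpoly.degree_le_of_ne_zero K ζ hpne hproot
    have h2 := natDegree_le_natDegree this
    omega
  have he0 : e ≠ 0 := Module.finrank_pos.ne'
  -- the top step is not trivial
  have he1 : e ≠ 1 := by
    intro he
    have hbot : (IntermediateField.adjoin K {ζ} : IntermediateField K ℂ) = ⊥ :=
      IntermediateField.finrank_eq_one_iff.mp he
    have hζK : ζ ∈ K := by
      have := adjoin_simple_eq_bot_iff.mp hbot
      rw [IntermediateField.mem_bot] at this
      obtain ⟨x, hx⟩ := this
      exact hx ▸ x.2
    -- build the automorphism sending ζ to ζ ^ (m/2 - 1)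
    set k := m / 2 - 1 with hkdef
    have hk3 : 3 ≤ k := by omega
    have hkm : k < m := by omega
    have hco : Nat.Coprime k m := by
      obtain ⟨t, rfl⟩ := h4
      have ht : 2 ≤ t := by omega
      have h1 := Nat.gcd_dvd_left k (4 * t)
      have h2 := Nat.gcd_dvd_right k (4 * t)
      have h3 : Nat.gcd k (4 * t) ∣ 2 := by
        have h5 : Nat.gcd k (4 * t) ∣ 2 * k := h1.mul_left 2
        have h6 := Nat.dvd_sub h2 h5
        have h7 : 4 * t - 2 * k = 2 := by omega
        rwa [h7] at h6
      rcases (Nat.dvd_prime Nat.prime_two).mp h3 with h | h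
      · exact h
      · exfalso
        rw [h] at h1
        omega
    have hhalf : ζ ^ (m / 2) = -1 := by
      have h2 : (ζ ^ (m / 2)) ^ 2 = 1 := by
        rw [← pow_mul]
        have : m / 2 * 2 = m := by omega
        rw [this, hpow1]
      have hne : ζ ^ (m / 2) ≠ 1 := hζ.pow_ne_one_of_pos_of_lt (by omega) (by omega)
      rcases mul_eq_zero.mp (show (ζ ^ (m/2) - 1) * (ζ ^ (m/2) + 1) = 0 by
        linear_combination h2) with h | h
      · exact absurd (by linear_combination h) hne
      · linear_combination h
    have hzk : ζ ^ k = -ζ⁻¹ := by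
      have h1 : ζ ^ k * ζ = -1 := by
        rw [← pow_succ]
        have : k + 1 = m / 2 := by omega
        rw [this, hhalf]
      field_simp
      linear_combination h1
    -- build the automorphism sending ζ to ζ ^ k
    have hintk : IsIntegral ℚ (ζ ^ k) := hint.pow _
    have hζk : IsPrimitiveRoot (ζ ^ k) m := hζ.pow_of_coprime k hco
    have hmin : minpoly ℚ ((adjoin.powerBasis hint).gen) =
        minpoly ℚ ((adjoin.powerBasis hintk).gen) := by
      rw [adjoin.powerBasis_gen, adjoin.powerBasis_gen]
      erw [minpoly_gen, minpoly_gen]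
      rw [← cyclotomic_eq_minpoly_rat hζ (by omega), ← cyclotomic_eq_minpoly_rat hζk (by omega)]
    have heqf : ℚ⟮ζ ^ k⟯ = ℚ⟮ζ⟯ := by
      apply le_antisymm
      · exact adjoin_simple_le_iff.mpr (pow_mem hζmem k)
      · obtain ⟨i, -, hi⟩ := hζk.eq_pow_of_pow_eq_one hpow1
        refine adjoin_simple_le_iff.mpr ?_
        have hmem : (ζ ^ k) ^ i ∈ ℚ⟮ζ ^ k⟯ := pow_mem (mem_adjoin_simple_self ℚ (ζ ^ k)) i
        rwa [hi] at hmem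
    set σ : ℚ⟮ζ⟯ ≃ₐ[ℚ] ℚ⟮ζ⟯ :=
      ((adjoin.powerBasis hint).equivOfMinpoly (adjoin.powerBasis hintk) hmin).trans
        (equivOfEq heqf) with hσdef
    set gζ : ℚ⟮ζ⟯ := AdjoinSimple.gen ℚ ζ with hgdef
    have hσζ : (σ gζ : ℂ) = ζ ^ k := by
      rw [hσdef, hgdef]
      rw [show AdjoinSimple.gen ℚ ζ = (adjoin.powerBasis hint).gen from
        (adjoin.powerBasis_gen hint).symm]
      erw [AlgEquiv.trans_apply, PowerBasis.equivOfMinpoly_gen, adjoin.powerBasis_gen hintk]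
      rfl
    have hσα : (σ (gζ - gζ⁻¹) : ℂ) = α := by
      rw [map_sub, map_inv₀]
      have hc : ((σ gζ - (σ gζ)⁻¹ : ℚ⟮ζ⟯) : ℂ) = (σ gζ : ℂ) - ((σ gζ : ℂ))⁻¹ := by
        push_cast [IntermediateField.coe_inv]
        ring
      rw [hc, hσζ, hzk, inv_neg, inv_inv, hαdef]
      ring
    set incl : K →ₐ[ℚ] ℚ⟮ζ⟯ := IntermediateField.inclusion hKL with hincldef
    set f : K →ₐ[ℚ] ℂ := K.val with hfdef
    set g : K →ₐ[ℚ] ℂ := (IntermediateField.val ℚ⟮ζ⟯).comp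
      ((σ : ℚ⟮ζ⟯ →ₐ[ℚ] ℚ⟮ζ⟯).comp incl) with hgdef2
    have hfg : f = g := by
      apply (adjoin.powerBasis hαint).algHom_ext
      rw [adjoin.powerBasis_gen]
      have h1 : incl (AdjoinSimple.gen ℚ α) = gζ - gζ⁻¹ := by
        apply Subtype.ext
        push_cast
        rfl
      have h2 : g (AdjoinSimple.gen ℚ α) = α := by
        rw [hgdef2]
        change ((σ (incl (AdjoinSimple.gen ℚ α)) : ℚ⟮ζ⟯) : ℂ) = α
        rw [h1]
        exact hσα
      erw [h2, hfdef]
      rfl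
    have happ : f ⟨ζ, hζK⟩ = g ⟨ζ, hζK⟩ := by rw [hfg]
    have hinclζ : incl ⟨ζ, hζK⟩ = gζ := by
      apply Subtype.ext
      rfl
    have hfin : ζ = ζ ^ k := by
      have hL : f ⟨ζ, hζK⟩ = ζ := rfl
      rw [hL, hgdef2] at happ
      change ζ = ((σ (incl ⟨ζ, hζK⟩) : ℚ⟮ζ⟯) : ℂ) at happ
      rw [hinclζ] at happ
      exact happ.trans hσζ
    have := hζ.pow_inj (show 1 < m by omega) hkm (by rw [pow_one]; exact hfin)
    omega
  have he : e = 2 := by omega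
  rw [he] at htower
  show Module.finrank ℚ K = Nat.totient m / 2
  omega
end

section
/- Let d ≥ 1 be an odd integer and let ζ_{2d} = exp(2πi/(2d)) and ζ_d = exp(2πi/d) in ℂ. Then ℚ(ζ_{2d} − ζ_{2d}⁻¹) = ℚ(ζ_d), as subfields of ℂ. -/
open IntermediateField

/-- For odd `d ≥ 1`, one has `ℚ(ζ_{2d} - ζ_{2d}⁻¹) = ℚ(ζ_d)` as subfields of `ℂ`. -/
theorem stmt17 (d : ℕ) (hd : 1 ≤ d) (hodd : Odd d) :
    (ℚ⟮zetaC (2 * d) - (zetaC (2 * d))⁻¹⟯ : IntermediateField ℚ ℂ) = ℚ⟮zetaC d⟯ := by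
  obtain ⟨m, hm⟩ := hodd
  have hd2 : (2 * d : ℕ) ≠ 0 := by omega
  haveI : NeZero (2 * d) := ⟨hd2⟩
  set ζ : ℂ := zetaC (2 * d) with hζdef
  set α : ℂ := ζ - ζ⁻¹ with hαdef
  have hζ : IsPrimitiveRoot ζ (2 * d) := Complex.isPrimitiveRoot_exp _ hd2
  have hζne : ζ ≠ 0 := hζ.ne_zero hd2
  have hint : IsIntegral ℚ ζ := by
    refine ⟨Polynomial.X ^ (2 * d) - 1, ?_, ?_⟩
    · apply Polynomial.monic_X_pow_sub_C _ hd2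
    · simp [hζ.pow_eq_one]
  -- ζ ^ d = -1
  have hζd : ζ ^ d = -1 := by
    have hsq : ζ ^ d * ζ ^ d = 1 := by
      rw [← pow_add]
      have : d + d = 2 * d := by ring
      rw [this, hζ.pow_eq_one]
    rcases mul_self_eq_one_iff.mp hsq with h | h
    · exact absurd h (hζ.pow_ne_one_of_pos_of_lt (by omega) (by omega))
    · exact h
  -- ζ ^ 2 = zetaC d
  have hζ2 : ζ ^ 2 = zetaC d := by
    rw [hζdef]
    show Complex.exp _ ^ 2 = Complex.exp _
    rw [← Complex.exp_nat_mul]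
    congr 1
    have hdC : (d : ℂ) ≠ 0 := Nat.cast_ne_zero.mpr (by omega)
    push_cast
    field_simp
  -- the key Galois step : ζ ∈ ℚ⟮α⟯
  have hkey : ζ ∈ (ℚ⟮α⟯ : IntermediateField ℚ ℂ) := by
    set K : IntermediateField ℚ ℂ := ℚ⟮ζ⟯ with hKdef
    haveI : FiniteDimensional ℚ K := adjoin.finiteDimensional hint
    set n : ℕ+ := ⟨2 * d, by omega⟩ with hndef
    haveI hcyc : IsCyclotomicExtension {2 * d} ℚ K := by
      haveI := hζ.adjoin_isCyclotomicExtension ℚ (n := 2 * d)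
      exact IsCyclotomicExtension.equiv _ ℚ _
        (Subalgebra.equivOfEq _ _ (adjoin_simple_toSubalgebra_of_isAlgebraic hint.isAlgebraic).symm)
    haveI : IsGalois ℚ K := IsCyclotomicExtension.isGalois {2 * d} ℚ K
    set ζ' : K := AdjoinSimple.gen ℚ ζ with hζ'def
    have hζ'c : (ζ' : ℂ) = ζ := rfl
    have hζ' : IsPrimitiveRoot ζ' (2 * d) := by
      rwa [← IsPrimitiveRoot.coe_submonoidClass_iff (B := IntermediateField ℚ ℂ)]
    set α' : K := ζ' - ζ'⁻¹ with hα'def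
    have hα'c : (α' : ℂ) = α := by
      rw [hα'def, hαdef]
      push_cast
      rfl
    set F : IntermediateField ℚ K := ℚ⟮α'⟯ with hFdef
    have hfix : F.fixingSubgroup = ⊥ := by
      rw [eq_bot_iff]
      intro σ hσ
      rw [Subgroup.mem_bot]
      have hσα : σ α' = α' := hσ ⟨α', mem_adjoin_simple_self ℚ α'⟩
      have hσζ' : IsPrimitiveRoot (σ ζ') (2 * d) :=
        hζ'.map_of_injective σ.injective
      obtain ⟨a, ha, haeq⟩ := hζ'.eq_pow_of_pow_eq_one hσζ'.pow_eq_one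
      have hcop : a.Coprime (2 * d) := (hζ'.pow_iff_coprime (by omega) a).mp (haeq ▸ hσζ')
      have haodd : ¬ (2 ∣ a) := by
        intro h2a
        have := Nat.dvd_gcd h2a (Dvd.intro d rfl)
        rw [hcop] at this
        omega
      -- push the fixed-point equation to ℂ
      have hσa : σ α' = ζ' ^ a - (ζ' ^ a)⁻¹ := by
        rw [hα'def, map_sub, map_inv₀, ← haeq]
      have heq : ζ ^ a - (ζ ^ a)⁻¹ = ζ - ζ⁻¹ := by
        have h0 : ((ζ' ^ a - (ζ' ^ a)⁻¹ : K) : ℂ) = ((α' : K) : ℂ) := by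
          rw [← hσa, hσα]
        rw [hα'c, hαdef] at h0
        push_cast at h0
        exact h0
      have hune : ζ ^ a ≠ 0 := pow_ne_zero _ hζne
      have h1 : ζ * ζ⁻¹ = 1 := mul_inv_cancel₀ hζne
      have h2 : ζ ^ a * (ζ ^ a)⁻¹ = 1 := mul_inv_cancel₀ hune
      have key : (ζ ^ a - ζ) * (ζ ^ a * ζ + 1) = 0 := by
        linear_combination (ζ ^ a * ζ) * heq + ζ * h2 - ζ ^ a * h1
      rcases mul_eq_zero.mp key with h | h
      · -- σ is the identity
        have hζa : ζ ^ a = ζ := sub_eq_zero.mp h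
        have hσζeq : σ ζ' = ζ' := by
          rw [← haeq]
          apply Subtype.ext
          push_cast
          exact hζa
        have hhom : σ.toAlgHom = AlgHom.id ℚ K := by
          apply adjoin_algHom_ext
          rintro x (rfl : x = ζ)
          exact hσζeq
        exact AlgEquiv.ext fun x => AlgHom.ext_iff.mp hhom x
      · -- impossible case
        exfalso
        have hpow : ζ ^ (a + 1) = ζ ^ d := by
          rw [pow_succ, hζd]
          exact eq_neg_of_add_eq_zero_left h
        rcases lt_or_eq_of_le (Nat.succ_le_of_lt ha) with hlt | heq2
        · have := hζ.pow_inj hlt (by omega) hpow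
          omega
        · have hone : ζ ^ (a + 1) = 1 := by
            rw [show a + 1 = 2 * d from heq2]
            exact hζ.pow_eq_one
          rw [hpow, hζd] at hone
          norm_num at hone
    have hFtop : F = ⊤ := by
      rw [← IsGalois.fixedField_fixingSubgroup F, hfix]
      apply eq_top_iff.mpr
      rintro x -
      rintro ⟨g, hg⟩
      rw [Subgroup.mem_bot] at hg
      subst hg
      rfl
    have hζ'F : ζ' ∈ F := hFtop ▸ mem_top
    have hmem : (ζ' : ℂ) ∈ F.map K.val := ⟨ζ', hζ'F, rfl⟩
    erw [hFdef, adjoin_map, Set.image_singleton, show K.val α' = α from hα'c] at hmem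
    exact hmem
  -- conclude
  apply le_antisymm
  · rw [adjoin_simple_le_iff]
    have hgen : zetaC d ∈ (ℚ⟮zetaC d⟯ : IntermediateField ℚ ℂ) := mem_adjoin_simple_self ℚ _
    have hζmem : ζ ∈ (ℚ⟮zetaC d⟯ : IntermediateField ℚ ℂ) := by
      have hval : ζ = -((zetaC d) ^ ((d + 1) / 2)) := by
        rw [← hζ2, ← pow_mul]
        have h21 : 2 * ((d + 1) / 2) = d + 1 := by omega
        rw [h21, pow_succ, hζd]
        ring
      rw [hval]
      exact neg_mem (pow_mem hgen _)
    exact sub_mem hζmem (inv_mem hζmem)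
  · rw [adjoin_simple_le_iff, ← hζ2]
    exact pow_mem hkey 2
end
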